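/- If c is a codeword of a linear code with local codes on supports A_1,…,A_μ arranged cyclically (each consecutive pair A_i, A_{(i+1) mod μ} overlapping, μ ≥ 4), each local code having minimum distance ρ+1, and the set E of erased coordinates satisfies ρ < |E| ≤ 2ρ while no local code has between 1 and ρ erasures, then all coordinates of E are contained in the union A_i ∪ A_{(i+1) mod μ} of a single pair of consecutive supports. -/

import Mathlib

/-- If the supports `A 1, …, A μ` of the local codes cover `[n]` and are
arranged cyclically (non-adjacent supports are disjoint, `μ ≥ 4`), and the erasure set
`E` satisfies `ρ < |E| ≤ 2ρ` while no local code has between `1` and `ρ` erasures, then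
all erased coordinates lie in the union `A i ∪ A (i+1)` of a single pair of consecutive
supports, i.e. `{i : |E ∩ A i| > 0} ⊆ {i, i+1}` for some `i`. -/
theorem stmt9 {n ρ : ℕ} (M : ℕ) [NeZero M] (hM : 4 ≤ M)
    (A : Fin M → Finset (Fin n))
    (hcover : ∀ x : Fin n, ∃ i, x ∈ A i)
    (hdisj : ∀ i j : Fin M, j ≠ i → j ≠ i + 1 → i ≠ j + 1 → Disjoint (A i) (A j))
    (E : Finset (Fin n)) (hlo : ρ < E.card) (hhi : E.card ≤ 2 * ρ)
    (hloc : ∀ i, (E ∩ A i).card = 0 ∨ ρ < (E ∩ A i).card) :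
    ∃ i : Fin M, (∀ x ∈ E, x ∈ A i ∪ A (i + 1)) ∧
      (∀ i', 0 < (E ∩ A i').card → i' = i ∨ i' = i + 1) := by
  open Fin.NatCast in
  have hnum : ∀ a : ℕ, a < M → a ≠ 0 → ((a : Fin M) ≠ 0) := by
    intro a ha h0
    simp [Fin.ext_iff, Fin.val_cast_of_lt ha, h0]
  have h1 : (1 : Fin M) ≠ 0 := by have := hnum 1 (by omega) (by omega); simpa using this
  have h2 : (2 : Fin M) ≠ 0 := by have := hnum 2 (by omega) (by omega); simpa using this
  have h3 : (3 : Fin M) ≠ 0 := by have := hnum 3 (by omega) (by omega); simpa using this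
  have hne : ∀ a c : Fin M, c ≠ 0 → a + c ≠ a := by
    intro a c hc h
    exact hc (add_left_cancel (a := a) (by rw [add_zero]; exact h))
  have hbig : ∀ j, 0 < (E ∩ A j).card → ρ < (E ∩ A j).card := by
    intro j h; rcases hloc j with h' | h' <;> omega
  have hkey : ∀ j k, 0 < (E ∩ A j).card → 0 < (E ∩ A k).card →
      k ≠ j → k ≠ j + 1 → j ≠ k + 1 → False := by
    intro j k hj hk ha hb hc
    have hd := hdisj j k ha hb hc
    have hd' : Disjoint (E ∩ A j) (E ∩ A k) :=
      hd.mono Finset.inter_subset_right Finset.inter_subset_right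
    have hcard := Finset.card_union_of_disjoint hd'
    have hsub : (E ∩ A j) ∪ (E ∩ A k) ⊆ E := by
      intro y hy; rcases Finset.mem_union.mp hy with h | h <;>
        exact (Finset.mem_inter.mp h).1
    have hle := Finset.card_le_card hsub
    have := hbig j hj; have := hbig k hk
    omega
  obtain ⟨x, hx⟩ := Finset.card_pos.mp (Nat.lt_of_le_of_lt (Nat.zero_le ρ) hlo)
  obtain ⟨i0, hi0⟩ := hcover x
  have hpos0 : 0 < (E ∩ A i0).card :=
    Finset.card_pos.mpr ⟨x, Finset.mem_inter.mpr ⟨hx, hi0⟩⟩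
  have hadj : ∀ j, 0 < (E ∩ A j).card → j = i0 ∨ j = i0 + 1 ∨ i0 = j + 1 := by
    intro j hj
    by_contra hcon
    push_neg at hcon
    exact hkey i0 j hpos0 hj hcon.1 hcon.2.1 hcon.2.2
  have main : ∃ i : Fin M, ∀ i', 0 < (E ∩ A i').card → i' = i ∨ i' = i + 1 := by
    by_cases hc : 0 < (E ∩ A (i0 + 1)).card
    · refine ⟨i0, fun j hj => ?_⟩
      rcases hadj j hj with h | h | h
      · exact Or.inl h
      · exact Or.inr h
      · exfalso
        have e1 : i0 + 1 = j + 2 := by rw [h]; open Fin.CommRing in ring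
        refine hkey j (i0 + 1) hj hc ?_ ?_ ?_
        · rw [e1]; exact hne j 2 h2
        · rw [e1, show j + 2 = (j + 1) + 1 by open Fin.CommRing in ring]; exact hne (j + 1) 1 h1
        · rw [e1, show j + 2 + 1 = j + 3 by open Fin.CommRing in ring]; exact (hne j 3 h3).symm
    · refine ⟨i0 - 1, fun j hj => ?_⟩
      have hi1 : i0 - 1 + 1 = i0 := by open Fin.CommRing in ring
      rcases hadj j hj with h | h | h
      · exact Or.inr (by rw [hi1]; exact h)
      · exact absurd (h ▸ hj) hc
      · exact Or.inl (by rw [h]; open Fin.CommRing in ring)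
  obtain ⟨i, hi⟩ := main
  refine ⟨i, fun x' hx' => ?_, hi⟩
  obtain ⟨j, hj⟩ := hcover x'
  have hjp : 0 < (E ∩ A j).card :=
    Finset.card_pos.mpr ⟨x', Finset.mem_inter.mpr ⟨hx', hj⟩⟩
  rcases hi j hjp with h | h
  · exact Finset.mem_union.mpr (Or.inl (h ▸ hj))
  · exact Finset.mem_union.mpr (Or.inr (h ▸ hj))
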